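/- For a connected k-uniform hypergraph H and vertex u ∈ V(H), the path tree T(H,u) is a k-uniform hypertree, i.e., it is connected and contains no cycle. -/

import Mathlib

open scoped Classical

structure FinHypergraph (α : Type*) [DecidableEq α] where
  verts : Finset α
  edges : Finset (Finset α)
  edge_sub : ∀ e ∈ edges, e ⊆ verts

namespace FinHypergraph

variable {α : Type*} [DecidableEq α] {β : Type*} [DecidableEq β]

/-- `H` is `k`-uniform: every edge has exactly `k` vertices. -/
def IsUniform (H : FinHypergraph α) (k : ℕ) : Prop := ∀ e ∈ H.edges, e.card = k

/-- The degree of a vertex: the number of edges containing it. -/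
def degree (H : FinHypergraph α) (v : α) : ℕ := (H.edges.filter (fun e => v ∈ e)).card

/-- `Δ` is the maximum degree of `H`. -/
def maxDegree (H : FinHypergraph α) (Δ : ℕ) : Prop :=
  (∀ v, H.degree v ≤ Δ) ∧ ∃ v ∈ H.verts, H.degree v = Δ

/-- Two vertices are adjacent if some edge contains both. -/
def Adj (H : FinHypergraph α) (a b : α) : Prop := ∃ e ∈ H.edges, a ∈ e ∧ b ∈ e

/-- `H` is connected: nonempty and any two vertices joined by a walk. -/
def Connected (H : FinHypergraph α) : Prop :=
  H.verts.Nonempty ∧ ∀ a ∈ H.verts, ∀ b ∈ H.verts, Relation.ReflTransGen H.Adj a b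

/-- A matching: a set of pairwise disjoint edges of `H`. -/
def IsMatching (H : FinHypergraph α) (M : Finset (Finset α)) : Prop :=
  M ⊆ H.edges ∧ ∀ e ∈ M, ∀ f ∈ M, e ≠ f → Disjoint e f

/-- `p(H, r)`: the number of matchings of size `r`. -/
noncomputable def matchCount (H : FinHypergraph α) (r : ℕ) : ℕ :=
  (H.edges.powerset.filter (fun M => M.card = r ∧ H.IsMatching M)).card

/-- The matching polynomial `μ(H,x) = Σ_r (-1)^r p(H,r) x^{|V| - k r}`. -/
noncomputable def matchingPoly (H : FinHypergraph α) (k : ℕ) : Polynomial ℝ :=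
  ∑ r ∈ Finset.range (H.edges.card + 1),
    Polynomial.C ((-1 : ℝ) ^ r * (H.matchCount r : ℝ)) * Polynomial.X ^ (H.verts.card - k * r)

/-- Deleting a set of vertices: induced sub-hypergraph on `verts \ W`. -/
def delete (H : FinHypergraph α) (W : Finset α) : FinHypergraph α where
  verts := H.verts \ W
  edges := H.edges.filter (fun e => Disjoint e W)
  edge_sub := by
    intro e he
    simp only [Finset.mem_filter] at he
    exact Finset.subset_sdiff.mpr ⟨H.edge_sub e he.1, he.2⟩

/-- The set of moduli of the complex zeros of a real polynomial. -/
def rootModuli (p : Polynomial ℝ) : Set ℝ :=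
  {m | ∃ z : ℂ, (Polynomial.aeval z) p = 0 ∧ ‖z‖ = m}

/-- `λ(H)`: the maximum modulus of the complex zeros of the matching polynomial. -/
noncomputable def lam (H : FinHypergraph α) (k : ℕ) : ℝ :=
  sSup (rootModuli (H.matchingPoly k))


/-! ### Paths, cycles and path trees -/

variable {α : Type*} [DecidableEq α]

/-- The sequence of vertices `v₀ = u, v₁, …` visited by a walk encoded as a list of
(edge, next-vertex) steps. -/
def vertAt (u : α) (p : List (Finset α × α)) (t : ℕ) : α :=
  (u :: p.map Prod.snd).getD t u

/-- The terminal vertex of a walk starting at `u`. -/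
def lastVert (u : α) (p : List (Finset α × α)) : α :=
  (p.map Prod.snd).getLastD u

/-- `p` is a nonbacktracking path in `H` starting at `u`: the vertices and the edges
are distinct, consecutive conditions `v_{t}, v_{t+1} ∈ e_{t+1}` hold, and edge
`e_{t+1}` contains none of the vertices `v₀, …, v_{t-1}`. -/
def IsNBPath (H : FinHypergraph α) (u : α) (p : List (Finset α × α)) : Prop :=
  u ∈ H.verts ∧ (p.map Prod.fst).Nodup ∧ (u :: p.map Prod.snd).Nodup ∧
  ∀ t < p.length,
    (p.getD t (∅, u)).1 ∈ H.edges ∧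
    vertAt u p t ∈ (p.getD t (∅, u)).1 ∧
    (p.getD t (∅, u)).2 ∈ (p.getD t (∅, u)).1 ∧
    ∀ i < t, vertAt u p i ∉ (p.getD t (∅, u)).1

/-- `H` contains a cycle: a closed walk of positive length with distinct edges,
distinct vertices except that the first and last coincide, and consecutive vertices
distinct. -/
def HasCycle (H : FinHypergraph α) : Prop :=
  ∃ (u : α) (p : List (Finset α × α)), u ∈ H.verts ∧ p ≠ [] ∧
    (p.map Prod.fst).Nodup ∧ (p.map Prod.snd).Nodup ∧ lastVert u p = u ∧
    ∀ t < p.length,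
      (p.getD t (∅, u)).1 ∈ H.edges ∧
      vertAt u p t ∈ (p.getD t (∅, u)).1 ∧
      (p.getD t (∅, u)).2 ∈ (p.getD t (∅, u)).1 ∧
      vertAt u p t ≠ (p.getD t (∅, u)).2

/-- A `k`-uniform hypertree: connected and acyclic. -/
def IsHypertree (H : FinHypergraph α) (k : ℕ) : Prop :=
  H.IsUniform k ∧ H.Connected ∧ ¬ H.HasCycle

/-- The vertex set of the path tree: all nonbacktracking paths in `H` starting at `u`. -/
noncomputable def pathTreeVerts (H : FinHypergraph α) (u : α) [Fintype α] :
    Finset (List (Finset α × α)) :=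
  Set.Finite.toFinset (s := {p | H.IsNBPath u p}) (by
    apply Set.Finite.subset
      (List.finite_length_le (Finset α × α) (Fintype.card (Finset α)))
    intro p hp
    have hnd : (p.map Prod.fst).Nodup := hp.2.1
    have := hnd.length_le_card
    simpa using this)

/-- The path tree `T(H,u)` of `H` with respect to `u`: vertices are the
nonbacktracking paths starting at `u`; a path `p₁` together with its continuations
through a common terminal edge `e` (one for each vertex of `e` other than the terminal
vertex of `p₁`) forms an edge. -/
noncomputable def pathTree (H : FinHypergraph α) (u : α) [Fintype α] :
    FinHypergraph (List (Finset α × α)) where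
  verts := pathTreeVerts H u
  edges := ((pathTreeVerts H u ×ˢ H.edges).filter
      (fun q => (q.2.erase (lastVert u q.1)).Nonempty ∧
        ∀ v ∈ q.2.erase (lastVert u q.1), H.IsNBPath u (q.1 ++ [(q.2, v)]))).image
      (fun q => insert q.1 ((q.2.erase (lastVert u q.1)).image
        (fun v => q.1 ++ [(q.2, v)])))
  edge_sub := by
    intro E hE
    simp only [Finset.mem_image, Finset.mem_filter, Finset.mem_product] at hE
    obtain ⟨q, ⟨⟨hq1, _⟩, _, hall⟩, rfl⟩ := hE
    intro p hp
    simp only [Finset.mem_insert, Finset.mem_image] at hp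
    rcases hp with rfl | ⟨v, hv, rfl⟩
    · exact hq1
    · unfold pathTreeVerts
      rw [Set.Finite.mem_toFinset]
      exact hall v hv

/-- Isomorphism of hypergraphs: a bijection between the vertex sets carrying edges
onto edges. -/
def Isom {β : Type*} [DecidableEq β] (H₁ : FinHypergraph α) (H₂ : FinHypergraph β) : Prop :=
  ∃ f : α → β, Set.BijOn f ↑H₁.verts ↑H₂.verts ∧
    (∀ e ∈ H₁.edges, e.image f ∈ H₂.edges) ∧
    (∀ E ∈ H₂.edges, ∃ e ∈ H₁.edges, e.image f = E)

end FinHypergraph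


namespace FinHypergraph

variable {α : Type*} [DecidableEq α]

private lemma cons_getD_length' {γ : Type*} (l : List γ) (a d : γ) :
    (a :: l).getD l.length d = l.getLastD a := by
  induction l generalizing a with
  | nil => rfl
  | cons b l ih =>
    rw [List.length_cons, List.getD_cons_succ, ih b, List.getLastD_cons]

lemma vertAt_eq_getElem (u : α) (p : List (Finset α × α)) {t : ℕ} (ht : t < p.length + 1) :
    vertAt u p t = (u :: p.map Prod.snd)[t]'(by simpa using ht) :=
  List.getD_eq_getElem _ _ (by simpa using ht)

lemma vertAt_append (u : α) (p r : List (Finset α × α)) {t : ℕ} (ht : t ≤ p.length) :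
    vertAt u (p ++ r) t = vertAt u p t := by
  have h1 : (u :: (p ++ r).map Prod.snd) = (u :: p.map Prod.snd) ++ r.map Prod.snd := by simp
  rw [vertAt_eq_getElem u (p ++ r) (by simp; omega), vertAt_eq_getElem u p (by omega),
    List.getElem_of_eq h1, List.getElem_append_left (by simp; omega)]

lemma vertAt_length (u : α) (p : List (Finset α × α)) :
    vertAt u p p.length = lastVert u p := by
  have := cons_getD_length' (p.map Prod.snd) u u
  simpa [vertAt, lastVert] using this

lemma vertAt_succ (u : α) (p : List (Finset α × α)) {t : ℕ} (ht : t < p.length) :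
    vertAt u p (t + 1) = (p.getD t (∅, u)).2 := by
  rw [vertAt_eq_getElem u p (by omega), List.getD_eq_getElem _ _ ht]
  simp

lemma lastVert_mem (u : α) (p : List (Finset α × α)) : lastVert u p ∈ u :: p.map Prod.snd :=
  List.getLastD_mem_cons

private lemma getD_concat_self' {γ : Type*} (p : List γ) (x d : γ) :
    (p ++ [x]).getD p.length d = x := by
  rw [List.getD_eq_getElem _ _ (by simp)]
  exact List.getElem_concat_length rfl _

private lemma getD_concat_lt' {γ : Type*} (p : List γ) (x d : γ) {t : ℕ} (ht : t < p.length) :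
    (p ++ [x]).getD t d = p.getD t d := by
  rw [List.getD_eq_getElem _ _ (by simp; omega), List.getD_eq_getElem _ _ ht,
    List.getElem_append_left ht]

lemma exists_vertAt_of_mem {u x : α} {q : List (Finset α × α)}
    (hx : x ∈ u :: q.map Prod.snd) : ∃ i ≤ q.length, vertAt u q i = x := by
  obtain ⟨i, hi, hix⟩ := List.mem_iff_getElem.mp hx
  have hi' : i ≤ q.length := by simp at hi; omega
  exact ⟨i, hi', by rw [vertAt_eq_getElem u q (by omega)]; exact hix⟩

lemma isNBPath_concat_iff {H : FinHypergraph α} {u : α} {q : List (Finset α × α)}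
    {e : Finset α} {w : α} :
    H.IsNBPath u (q ++ [(e, w)]) ↔
      H.IsNBPath u q ∧ e ∈ H.edges ∧ lastVert u q ∈ e ∧ w ∈ e ∧
      w ∉ u :: q.map Prod.snd ∧ e ∉ q.map Prod.fst ∧ ∀ i < q.length, vertAt u q i ∉ e := by
  constructor
  · rintro ⟨hu, hf, hs, hc⟩
    have hf2 : (q.map Prod.fst ++ [e]).Nodup := by simpa using hf
    rw [List.nodup_append] at hf2
    have hs2 : ((u :: q.map Prod.snd) ++ [w]).Nodup := by simpa using hs
    rw [List.nodup_append] at hs2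
    have hlen : q.length < (q ++ [(e, w)]).length := by simp
    have hlast := hc q.length hlen
    rw [getD_concat_self'] at hlast
    have hva : vertAt u (q ++ [(e, w)]) q.length = lastVert u q := by
      rw [vertAt_append u q _ le_rfl, vertAt_length]
    refine ⟨⟨hu, hf2.1, hs2.1, ?_⟩, hlast.1, by rw [← hva]; exact hlast.2.1, hlast.2.2.1,
      fun hm => hs2.2.2 w hm w (by simp) rfl, fun hm => hf2.2.2 e hm e (by simp) rfl,
      fun i hi => ?_⟩
    · intro t ht
      have hc' := hc t (by simp; omega)
      rw [getD_concat_lt' _ _ _ ht] at hc'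
      rw [vertAt_append u q _ (le_of_lt ht)] at hc'
      refine ⟨hc'.1, hc'.2.1, hc'.2.2.1, fun i hi => ?_⟩
      have := hc'.2.2.2 i hi
      rwa [vertAt_append u q _ (by omega)] at this
    · have := hlast.2.2.2 i hi
      rwa [vertAt_append u q _ (le_of_lt hi)] at this
  · rintro ⟨⟨hu, hf, hs, hc⟩, he, hlast, hw, hwn, hen, hie⟩
    refine ⟨hu, ?_, ?_, ?_⟩
    · have h1 : (q ++ [(e, w)]).map Prod.fst = q.map Prod.fst ++ [e] := by simp
      rw [h1, List.nodup_append]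
      exact ⟨hf, List.nodup_singleton e, fun a ha b hb hab => hen (by rw [List.mem_singleton] at hb; rw [← hb, ← hab]; exact ha)⟩
    · have h1 : u :: (q ++ [(e, w)]).map Prod.snd = (u :: q.map Prod.snd) ++ [w] := by simp
      rw [h1, List.nodup_append]
      exact ⟨hs, List.nodup_singleton w, fun a ha b hb hab => hwn (by rw [List.mem_singleton] at hb; rw [← hb, ← hab]; exact ha)⟩
    · intro t ht
      have ht' : t < q.length + 1 := by simpa using ht
      rcases lt_or_eq_of_le (Nat.lt_succ_iff.mp ht') with h | h
      · rw [getD_concat_lt' _ _ _ h, vertAt_append u q _ (le_of_lt h)]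
        have hc' := hc t h
        refine ⟨hc'.1, hc'.2.1, hc'.2.2.1, fun i hi => ?_⟩
        rw [vertAt_append u q _ (by omega)]
        exact hc'.2.2.2 i hi
      · subst h
        rw [getD_concat_self']
        refine ⟨he, ?_, hw, fun i hi => ?_⟩
        · rw [vertAt_append u q _ le_rfl, vertAt_length]; exact hlast
        · rw [vertAt_append u q _ (le_of_lt hi)]; exact hie i hi

lemma not_mem_cons_snd {u : α} {q : List (Finset α × α)} {e : Finset α}
    (hie : ∀ i < q.length, vertAt u q i ∉ e) {w : α} (hw : w ∈ e)
    (hwl : w ≠ lastVert u q) : w ∉ u :: q.map Prod.snd := by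
  intro hmem
  obtain ⟨i, hi, hvw⟩ := exists_vertAt_of_mem hmem
  subst hvw
  rcases lt_or_eq_of_le hi with h | h
  · exact hie i h hw
  · exact hwl (by rw [h, vertAt_length])

lemma mem_pathTreeVerts {H : FinHypergraph α} {u : α} [Fintype α] {p : List (Finset α × α)} :
    p ∈ pathTreeVerts H u ↔ H.IsNBPath u p := Set.Finite.mem_toFinset _

lemma mem_pathTree_edges {H : FinHypergraph α} {u : α} [Fintype α]
    {E : Finset (List (Finset α × α))} :
    E ∈ (H.pathTree u).edges ↔ ∃ q e, H.IsNBPath u q ∧ e ∈ H.edges ∧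
      (e.erase (lastVert u q)).Nonempty ∧
      (∀ v ∈ e.erase (lastVert u q), H.IsNBPath u (q ++ [(e, v)])) ∧
      E = insert q ((e.erase (lastVert u q)).image fun v => q ++ [(e, v)]) := by
  show E ∈ Finset.image _ _ ↔ _
  simp only [Finset.mem_image, Finset.mem_filter, Finset.mem_product, mem_pathTreeVerts]
  constructor
  · rintro ⟨⟨q, e⟩, ⟨⟨h1, h2⟩, h3, h4⟩, rfl⟩; exact ⟨q, e, h1, h2, h3, h4, rfl⟩
  · rintro ⟨q, e, h1, h2, h3, h4, rfl⟩; exact ⟨⟨q, e⟩, ⟨⟨h1, h2⟩, h3, h4⟩, rfl⟩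

end FinHypergraph

/-- For a connected `k`-graph `H` and `u ∈ V(H)`, the path tree `T(H,u)` is a
`k`-uniform hypertree: connected and acyclic. -/
theorem pathTree_isHypertree {α : Type*} [DecidableEq α] [Fintype α]
    (H : FinHypergraph α) (k : ℕ) (hk : 2 ≤ k) (hH : H.IsUniform k)
    (hconn : H.Connected) (u : α) (hu : u ∈ H.verts) :
    (H.pathTree u).IsHypertree k := by
  classical
  refine ⟨?_, ⟨?_, ?_⟩, ?_⟩
  · -- uniform
    intro E hE
    rw [FinHypergraph.mem_pathTree_edges] at hE
    obtain ⟨q, e, hq, he, hne, hall, rfl⟩ := hE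
    obtain ⟨v, hv⟩ := hne
    have hv' := FinHypergraph.isNBPath_concat_iff.mp (hall v hv)
    have hlast : FinHypergraph.lastVert u q ∈ e := hv'.2.2.1
    have hnm : q ∉ (e.erase (FinHypergraph.lastVert u q)).image fun v => q ++ [(e, v)] := by
      simp only [Finset.mem_image, not_exists]
      rintro x ⟨hx, hxe⟩
      apply_fun List.length at hxe
      simp at hxe
    rw [Finset.card_insert_of_notMem hnm,
      Finset.card_image_of_injOn (fun a _ b _ h => by
        have := List.append_cancel_left h
        simpa using this),
      Finset.card_erase_of_mem hlast, hH e he]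
    omega
  · -- nonempty
    refine ⟨[], ?_⟩
    show [] ∈ FinHypergraph.pathTreeVerts H u
    rw [FinHypergraph.mem_pathTreeVerts]
    exact ⟨hu, by simp, by simp, by simp⟩
  · -- connected
    have key : ∀ p : List (Finset α × α), H.IsNBPath u p →
        Relation.ReflTransGen (H.pathTree u).Adj [] p := by
      intro p
      induction p using List.reverseRecOn with
      | nil => intro _; exact Relation.ReflTransGen.refl
      | append_singleton q x ih =>
        obtain ⟨e, v⟩ := x
        intro hp
        rw [FinHypergraph.isNBPath_concat_iff] at hp
        obtain ⟨hq, he, hlast, hv, hvn, hen, hie⟩ := hp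
        have hvne : v ≠ FinHypergraph.lastVert u q := fun h =>
          hvn (h ▸ FinHypergraph.lastVert_mem u q)
        have hvmem : v ∈ e.erase (FinHypergraph.lastVert u q) := Finset.mem_erase.mpr ⟨hvne, hv⟩
        have hstep : (H.pathTree u).Adj q (q ++ [(e, v)]) := by
          refine ⟨insert q ((e.erase (FinHypergraph.lastVert u q)).image fun w => q ++ [(e, w)]),
            ?_, by simp, ?_⟩
          · rw [FinHypergraph.mem_pathTree_edges]
            refine ⟨q, e, hq, he, ⟨v, hvmem⟩, fun w hw => ?_, rfl⟩
            have hw' := Finset.mem_erase.mp hw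
            exact FinHypergraph.isNBPath_concat_iff.mpr ⟨hq, he, hlast, hw'.2,
              FinHypergraph.not_mem_cons_snd hie hw'.2 hw'.1, hen, hie⟩
          · exact Finset.mem_insert.mpr (Or.inr (Finset.mem_image_of_mem _ hvmem))
        exact (ih hq).tail hstep
    have hsym : Symmetric (H.pathTree u).Adj := fun x y ⟨E, hE, h1, h2⟩ => ⟨E, hE, h2, h1⟩
    intro a ha b hb
    have ha' : H.IsNBPath u a := FinHypergraph.mem_pathTreeVerts.mp ha
    have hb' : H.IsNBPath u b := FinHypergraph.mem_pathTreeVerts.mp hb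
    exact ((@Relation.ReflTransGen.symmetric _ _ ⟨hsym⟩).symm _ _ (key a ha')).trans (key b hb')
  · -- acyclic
    rintro ⟨P0, p, hP0v, hpne, hfnd, hsnd, hlastP, hcond⟩
    have hn1 : 1 ≤ p.length := by
      cases p with
      | nil => exact absurd rfl hpne
      | cons a l => simp
    have hP0 : FinHypergraph.vertAt P0 p 0 = P0 := by simp [FinHypergraph.vertAt]
    have hPn : FinHypergraph.vertAt P0 p p.length = P0 := by
      rw [FinHypergraph.vertAt_length]; exact hlastP
    have hPsucc : ∀ t, t < p.length →
        FinHypergraph.vertAt P0 p (t + 1) = (p.getD t (∅, P0)).2 :=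
      fun t ht => FinHypergraph.vertAt_succ P0 p ht
    rcases eq_or_lt_of_le hn1 with h1 | h2
    · -- length 1
      have h0 := (hcond 0 (by omega)).2.2.2
      apply h0
      rw [hP0, ← hPsucc 0 (by omega)]
      have h01 : (0 : ℕ) + 1 = p.length := by omega
      rw [h01, hPn]
    · -- length ≥ 2
      obtain ⟨t₀, ht₀mem, hmax⟩ := Finset.exists_max_image (Finset.Icc 1 p.length)
        (fun t => (FinHypergraph.vertAt P0 p t).length) ⟨1, by simp; omega⟩
      rw [Finset.mem_Icc] at ht₀mem
      have hmax' : ∀ t ≤ p.length,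
          (FinHypergraph.vertAt P0 p t).length ≤ (FinHypergraph.vertAt P0 p t₀).length := by
        intro t ht
        rcases Nat.eq_zero_or_pos t with rfl | hpos
        · have h := hmax p.length (by rw [Finset.mem_Icc]; omega)
          rw [hPn] at h
          rw [hP0]
          exact h
        · exact hmax t (by rw [Finset.mem_Icc]; omega)
      -- core lemma
      have core : ∀ s, s < p.length → FinHypergraph.vertAt P0 p t₀ ∈ (p.getD s (∅, P0)).1 →
          (∃ R ∈ (p.getD s (∅, P0)).1, R ≠ FinHypergraph.vertAt P0 p t₀ ∧
            R.length ≤ (FinHypergraph.vertAt P0 p t₀).length) →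
          (p.getD s (∅, P0)).1 = insert (FinHypergraph.vertAt P0 p t₀).dropLast
            ((((FinHypergraph.vertAt P0 p t₀).getLastD (∅, u)).1.erase
              (FinHypergraph.lastVert u (FinHypergraph.vertAt P0 p t₀).dropLast)).image
              fun v => (FinHypergraph.vertAt P0 p t₀).dropLast ++
                [(((FinHypergraph.vertAt P0 p t₀).getLastD (∅, u)).1, v)]) := by
        intro s hs hPt hR
        have hEmem : (p.getD s (∅, P0)).1 ∈ (H.pathTree u).edges := (hcond s hs).1
        rw [FinHypergraph.mem_pathTree_edges] at hEmem
        obtain ⟨q, e, hq, he, hne, hall, hEeq⟩ := hEmem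
        obtain ⟨R, hRmem, hRne, hRlen⟩ := hR
        have hqne : FinHypergraph.vertAt P0 p t₀ ≠ q := by
          intro hqeq
          rw [hEeq, Finset.mem_insert] at hRmem
          rcases hRmem with h | h
          · exact hRne (h.trans hqeq.symm)
          · obtain ⟨w, _, rfl⟩ := Finset.mem_image.mp h
            rw [hqeq] at hRlen
            simp at hRlen
        rw [hEeq, Finset.mem_insert] at hPt
        rcases hPt with h | h
        · exact absurd h hqne
        · obtain ⟨w, hw, hPeq⟩ := Finset.mem_image.mp h
          have hdl : (FinHypergraph.vertAt P0 p t₀).dropLast = q := by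
            rw [← hPeq]; exact List.dropLast_concat
          have hgl : (FinHypergraph.vertAt P0 p t₀).getLastD (∅, u) = (e, w) := by
            rw [← hPeq]; exact List.getLastD_concat
          rw [hEeq, hdl, hgl]
      -- apply core at s = t₀ - 1
      have hstep1 := hcond (t₀ - 1) (by omega)
      have ht₀eq : t₀ - 1 + 1 = t₀ := by omega
      have hPt₀mem : FinHypergraph.vertAt P0 p t₀ ∈ (p.getD (t₀ - 1) (∅, P0)).1 := by
        rw [← ht₀eq, hPsucc (t₀ - 1) (by omega)]
        exact hstep1.2.2.1
      have hEi := core (t₀ - 1) (by omega) hPt₀mem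
        ⟨FinHypergraph.vertAt P0 p (t₀ - 1), hstep1.2.1, by
          rw [← ht₀eq, hPsucc (t₀ - 1) (by omega)]; exact hstep1.2.2.2,
          hmax' (t₀ - 1) (by omega)⟩
      rcases lt_or_eq_of_le ht₀mem.2 with htlt | hteq
      · -- second edge at s = t₀
        have hstep2 := hcond t₀ htlt
        have hEj := core t₀ htlt hstep2.2.1
          ⟨FinHypergraph.vertAt P0 p (t₀ + 1), by
            rw [hPsucc t₀ htlt]; exact hstep2.2.2.1, by
            rw [hPsucc t₀ htlt]; exact fun h => hstep2.2.2.2 h.symm,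
            hmax' (t₀ + 1) (by omega)⟩
        have heq : (p.getD (t₀ - 1) (∅, P0)).1 = (p.getD t₀ (∅, P0)).1 := by
          rw [hEi, hEj]
        have hg1 : (p.getD (t₀ - 1) (∅, P0)).1 = (p.map Prod.fst)[t₀ - 1]'(by simp; omega) := by
          rw [List.getD_eq_getElem _ _ (by omega), List.getElem_map]
        have hg2 : (p.getD t₀ (∅, P0)).1 = (p.map Prod.fst)[t₀]'(by simp; omega) := by
          rw [List.getD_eq_getElem _ _ (by omega), List.getElem_map]
        rw [hg1, hg2] at heq
        have := (List.Nodup.getElem_inj_iff hfnd).mp heq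
        omega
      · -- t₀ = p.length, second edge at s = 0
        have hstep0 := hcond 0 (by omega)
        have hPt₀0 : FinHypergraph.vertAt P0 p t₀ = FinHypergraph.vertAt P0 p 0 := by
          rw [hteq, hPn, hP0]
        have hEj := core 0 (by omega) (by rw [hPt₀0, hP0]; exact hstep0.2.1)
          ⟨FinHypergraph.vertAt P0 p 1, by
            rw [hPsucc 0 (by omega)]; exact hstep0.2.2.1, by
            rw [hPsucc 0 (by omega), hPt₀0, hP0]; exact fun h => hstep0.2.2.2 h.symm,
            hmax' 1 (by omega)⟩
        have heq : (p.getD (t₀ - 1) (∅, P0)).1 = (p.getD 0 (∅, P0)).1 := by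
          rw [hEi, hEj]
        have hg1 : (p.getD (t₀ - 1) (∅, P0)).1 = (p.map Prod.fst)[t₀ - 1]'(by simp; omega) := by
          rw [List.getD_eq_getElem _ _ (by omega), List.getElem_map]
        have hg2 : (p.getD 0 (∅, P0)).1 = (p.map Prod.fst)[0]'(by simp; omega) := by
          rw [List.getD_eq_getElem _ _ (by omega), List.getElem_map]
        rw [hg1, hg2] at heq
        have := (List.Nodup.getElem_inj_iff hfnd).mp heq
        omega
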